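/- For every integer n ≥ 1 and all x, the falling factorial satisfies (x)_n = x(x-1)⋯(x-n+1) = x · B_{n-1}^{(n)}(x) as an identity of polynomials in x, where B_{n-1}^{(n)}(x) is the Bernoulli polynomial of degree n-1 and order n. -/

import Mathlib

open PowerSeries


/-- The formal power series `e^{ct} = ∑_{m≥0} c^m t^m / m!` over `ℂ`. -/
noncomputable def expPS (c : ℂ) : PowerSeries ℂ :=
  PowerSeries.mk fun m => c ^ m / (m.factorial : ℂ)

section Aux

lemma expPS_eq (c : ℂ) : expPS c = rescale c (exp ℂ) := by
  ext n
  simp [expPS, coeff_rescale, coeff_exp]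
  rw [div_eq_mul_inv]

lemma expPS_mul (x y : ℂ) : expPS x * expPS y = expPS (x + y) := by
  rw [expPS_eq, expPS_eq, expPS_eq, exp_mul_exp_eq_exp_add]

lemma expPS_zero : expPS 0 = 1 := by
  ext n
  cases n <;> simp [expPS, coeff_one]

noncomputable def Ups : PowerSeries ℂ := PowerSeries.mk fun m => ((m + 1).factorial : ℂ)⁻¹
noncomputable def Vps : PowerSeries ℂ := Ups⁻¹

lemma hXU : expPS 1 - 1 = X * Ups := by
  ext n
  cases n with
  | zero => simp [expPS, Ups, coeff_one]
  | succ m => simp [expPS, Ups, coeff_one, coeff_succ_X_mul]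

lemma hU0 : constantCoeff Ups = 1 := by
  rw [← coeff_zero_eq_constantCoeff]; simp [Ups]

lemma hUV : Ups * Vps = 1 :=
  PowerSeries.mul_inv_cancel Ups (by rw [hU0]; exact one_ne_zero)

lemma hV0 : constantCoeff Vps = 1 := by
  rw [Vps, PowerSeries.constantCoeff_inv, hU0, inv_one]

lemma hVE : Vps * (expPS 1 - 1) = X := by
  rw [hXU]
  calc Vps * (X * Ups) = X * (Ups * Vps) := by ring
  _ = X := by rw [hUV, mul_one]

lemma hUne : Ups ≠ 0 := by
  intro h
  have h0 := hU0
  rw [h] at h0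
  simp at h0

lemma hE1ne : expPS 1 - 1 ≠ 0 := by
  rw [hXU]
  exact mul_ne_zero PowerSeries.X_ne_zero hUne

lemma hDE : d⁄dX ℂ (expPS 1) = expPS 1 := by
  ext n
  rw [coeff_derivative]
  simp only [expPS, coeff_mk, one_pow]
  rw [Nat.factorial_succ]
  have h1 : ((n.factorial : ℂ)) ≠ 0 := Nat.cast_ne_zero.mpr n.factorial_ne_zero
  have h2 : ((n : ℂ) + 1) ≠ 0 := Nat.cast_add_one_ne_zero n
  field_simp
  rw [Nat.cast_mul, Nat.cast_succ]

lemma hXDU : X * d⁄dX ℂ Ups = expPS 1 - Ups := by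
  have h := congrArg (d⁄dX ℂ) hXU.symm
  rw [Derivation.leibniz, derivative_X, map_sub, hDE, Derivation.map_one_eq_zero, sub_zero,
    smul_eq_mul, smul_eq_mul, mul_one] at h
  linear_combination h

lemma hDV : d⁄dX ℂ Vps = - Vps ^ 2 * d⁄dX ℂ Ups := by
  rw [Vps, PowerSeries.derivative_inv']

lemma keyI (k : ℕ) :
    X * d⁄dX ℂ (Vps ^ (k + 1)) =
      (C ((k : ℂ) + 1)) * (Vps ^ (k + 1) - Vps ^ (k + 2) * expPS 1) := by
  rw [Derivation.leibniz_pow, hDV]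
  simp only [Nat.add_sub_cancel, smul_eq_mul, nsmul_eq_mul]
  have hVU : Vps ^ (k + 2) * Ups = Vps ^ (k + 1) := by
    calc Vps ^ (k + 2) * Ups = Vps ^ (k+1) * (Ups * Vps) := by ring
    _ = Vps ^ (k+1) := by rw [hUV, mul_one]
  have hXdu := hXDU
  have cast1 : ((k+1 : ℕ) : ℂ⟦X⟧) = C ((k:ℂ)+1) := by push_cast; simp [map_add, map_one]
  rw [cast1]
  calc X * (C ((k:ℂ)+1) * (Vps ^ k * (-Vps^2 * d⁄dX ℂ Ups)))
      = C ((k:ℂ)+1) * (- (Vps ^ (k+2)) * (X * d⁄dX ℂ Ups)) := by ring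
    _ = C ((k:ℂ)+1) * (- (Vps ^ (k+2)) * (expPS 1 - Ups)) := by rw [hXdu]
    _ = C ((k:ℂ)+1) * (Vps ^ (k+2) * Ups - Vps ^ (k+2) * expPS 1) := by ring
    _ = C ((k:ℂ)+1) * (Vps ^ (k + 1) - Vps ^ (k + 2) * expPS 1) := by rw [hVU]

lemma hJ (k : ℕ) : Vps ^ (k + 2) * expPS 1 = Vps ^ (k + 2) + X * Vps ^ (k + 1) := by
  have h : Vps ^ (k + 2) * (expPS 1 - 1) = Vps ^ (k+1) * (Vps * (expPS 1 - 1)) := by ring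
  rw [hVE] at h
  linear_combination h

lemma diag (k : ℕ) :
    coeff (k + 1) (Vps ^ (k + 2)) = - coeff k (Vps ^ (k + 1)) := by
  have h := congrArg (coeff (k + 1)) (keyI k)
  rw [coeff_succ_X_mul, coeff_derivative, coeff_C_mul, hJ k] at h
  rw [map_sub, map_add, coeff_succ_X_mul] at h
  have hk : ((k : ℂ) + 1) ≠ 0 := Nat.cast_add_one_ne_zero k
  have h2 : ((k:ℂ)+1) * (coeff (k+1) (Vps ^ (k+2)) + coeff k (Vps ^ (k+1))) = 0 := by
    linear_combination h
  rcases mul_eq_zero.mp h2 with h3 | h3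
  · exact absurd h3 hk
  · linear_combination h3

/-- coefficient of a product with `expPS x` is a polynomial function of `x`. -/
lemma poly_ex (f : PowerSeries ℂ) (k : ℕ) :
    ∃ p : Polynomial ℂ, ∀ x : ℂ, coeff k (f * expPS x) = p.eval x := by
  refine ⟨∑ ij ∈ Finset.HasAntidiagonal.antidiagonal k,
    Polynomial.C (coeff ij.1 f / (ij.2.factorial : ℂ)) * Polynomial.X ^ ij.2, fun x => ?_⟩
  rw [coeff_mul, Polynomial.eval_finset_sum]
  refine Finset.sum_congr rfl fun ij _ => ?_
  simp only [expPS, coeff_mk, Polynomial.eval_mul, Polynomial.eval_C, Polynomial.eval_pow,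
    Polynomial.eval_X]
  ring

lemma const_of_periodic (p : Polynomial ℂ) (h : ∀ x : ℂ, p.eval (x + 1) = p.eval x) :
    ∀ x : ℂ, p.eval x = p.eval 0 := by
  have hN : ∀ N : ℕ, p.eval (N : ℂ) = p.eval 0 := by
    intro N
    induction N with
    | zero => simp
    | succ m ih => push_cast; rw [h, ih]
  have hq : (p - Polynomial.C (p.eval 0)) = 0 := by
    apply Polynomial.eq_zero_of_infinite_isRoot
    apply Set.infinite_of_injective_forall_mem (f := (Nat.cast : ℕ → ℂ)) Nat.cast_injective
    intro N
    simp only [Set.mem_setOf_eq, Polynomial.IsRoot, Polynomial.eval_sub, Polynomial.eval_C]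
    rw [hN N, sub_self]
  intro x
  have := congrArg (Polynomial.eval x) hq
  simp only [Polynomial.eval_sub, Polynomial.eval_C, Polynomial.eval_zero] at this
  linear_combination this

lemma mainT : ∀ k : ℕ, ∀ x : ℂ,
    (k.factorial : ℂ) * coeff k (Vps ^ (k + 1) * expPS x)
      = ∏ i ∈ Finset.range k, (x - 1 - i) := by
  intro k
  induction k with
  | zero =>
    intro x
    have h1 : constantCoeff (expPS x) = 1 := by
      rw [← coeff_zero_eq_constantCoeff]; simp [expPS]
    simp only [Nat.factorial_zero, Nat.cast_one, one_mul, pow_one, Finset.range_zero,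
      Finset.prod_empty, coeff_zero_eq_constantCoeff, map_mul, hV0, h1]
    simp [hV0]
  | succ k ih =>
    -- polynomial for Φ
    obtain ⟨p, hp⟩ := poly_ex (Vps ^ (k + 2)) (k + 1)
    set p' : Polynomial ℂ := Polynomial.C (((k+1).factorial : ℂ)) * p with hp'def
    set q' : Polynomial ℂ :=
      ∏ i ∈ Finset.range (k+1), (Polynomial.X - Polynomial.C (1 + (i : ℂ))) with hq'def
    have hq' : ∀ y : ℂ, q'.eval y = ∏ i ∈ Finset.range (k+1), (y - 1 - i) := by
      intro y
      rw [hq'def, Polynomial.eval_prod]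
      exact Finset.prod_congr rfl fun i _ => by
        simp only [Polynomial.eval_sub, Polynomial.eval_X, Polynomial.eval_C]; ring
    have hp'' : ∀ y : ℂ, p'.eval y
        = ((k+1).factorial : ℂ) * coeff (k+1) (Vps ^ (k + 2) * expPS y) := by
      intro y
      rw [hp'def, Polynomial.eval_mul, Polynomial.eval_C, hp y]
    -- difference identity for the power series side
    have hΔ : ∀ y : ℂ, coeff (k+1) (Vps ^ (k + 2) * expPS (y+1))
        - coeff (k+1) (Vps ^ (k + 2) * expPS y)
        = coeff k (Vps ^ (k + 1) * expPS y) := by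
      intro y
      have hps : Vps ^ (k+2) * expPS (y+1) - Vps ^ (k+2) * expPS y
          = X * (Vps ^ (k+1) * expPS y) := by
        rw [← expPS_mul y 1]
        calc Vps ^ (k+2) * (expPS y * expPS 1) - Vps ^ (k+2) * expPS y
            = Vps ^ (k+1) * expPS y * (Vps * (expPS 1 - 1)) := by ring
          _ = X * (Vps ^ (k+1) * expPS y) := by rw [hVE]; ring
      have := congrArg (coeff (k+1)) hps
      rwa [map_sub, coeff_succ_X_mul] at this
    -- product difference identity
    have prodid : ∀ y : ℂ,
        (∏ i ∈ Finset.range (k+1), (y + 1 - 1 - i)) - ∏ i ∈ Finset.range (k+1), (y - 1 - i)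
        = ((k:ℂ)+1) * ∏ i ∈ Finset.range k, (y - 1 - i) := by
      intro y
      have e1 : (∏ i ∈ Finset.range (k+1), (y + 1 - 1 - i))
          = (∏ i ∈ Finset.range k, (y - 1 - i)) * y := by
        rw [Finset.prod_range_succ']
        congr 1
        exact Finset.prod_congr rfl fun i _ => by push_cast; ring
        · simp
      have e2 : (∏ i ∈ Finset.range (k+1), (y - 1 - i))
          = (∏ i ∈ Finset.range k, (y - 1 - i)) * (y - 1 - k) := Finset.prod_range_succ _ _
      rw [e1, e2]
      ring
    -- r := p' - q' is periodic
    have hper : ∀ y : ℂ, (p' - q').eval (y + 1) = (p' - q').eval y := by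
      intro y
      have hfac : (((k+1).factorial : ℕ) : ℂ) = ((k:ℂ)+1) * (k.factorial : ℂ) := by
        rw [Nat.factorial_succ]; push_cast; ring
      simp only [Polynomial.eval_sub]
      rw [hp'', hp'', hq', hq', hfac]
      linear_combination ((k:ℂ)+1) * (k.factorial:ℂ) * hΔ y - prodid y + ((k:ℂ)+1) * ih y
    have hconst := const_of_periodic _ hper
    -- value at 0
    have hzero : (p' - q').eval 0 = 0 := by
      simp only [Polynomial.eval_sub]
      rw [hp'', hq']
      rw [expPS_zero, mul_one, diag k]
      have hd : coeff k (Vps ^ (k+1)) = coeff k (Vps ^ (k+1) * expPS 0) := by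
        rw [expPS_zero, mul_one]
      rw [hd]
      have hfac : (((k+1).factorial : ℕ) : ℂ) = ((k:ℂ)+1) * (k.factorial : ℂ) := by
        rw [Nat.factorial_succ]; push_cast; ring
      have e2 : (∏ i ∈ Finset.range (k+1), ((0:ℂ) - 1 - i))
          = (∏ i ∈ Finset.range k, ((0:ℂ) - 1 - i)) * (0 - 1 - k) := Finset.prod_range_succ _ _
      rw [e2, hfac, ← ih 0]
      ring
    intro x
    have hx := hconst x
    rw [hzero] at hx
    rw [Polynomial.eval_sub] at hx
    have := sub_eq_zero.mp hx
    calc ((k+1).factorial : ℂ) * coeff (k+1) (Vps ^ (k + 2) * expPS x)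
        = p'.eval x := (hp'' x).symm
      _ = q'.eval x := this
      _ = ∏ i ∈ Finset.range (k+1), (x - 1 - i) := hq' x

end Aux

/-- For every integer `n ≥ 1` and all `x`,
`(x)_n = x(x-1)⋯(x-n+1) = x · B_{n-1}^{(n)}(x)`, where the Bernoulli polynomials of
order `α` are characterized by `(t/(e^t-1))^α e^{xt} = ∑_m B_m^{(α)}(x) t^m/m!`. -/
theorem stmt11 (n : ℕ) (hn : 1 ≤ n)
    (B : ℕ → ℕ → ℂ → ℂ)
    (hB : ∀ (α : ℕ) (x : ℂ),
      (expPS 1 - 1) ^ α *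
          PowerSeries.mk (fun m => B α m x / (m.factorial : ℂ)) =
        PowerSeries.X ^ α * expPS x) :
    ∀ x : ℂ, ∏ i ∈ Finset.range n, (x - i) = x * B n (n - 1) x := by
  intro x
  obtain ⟨k, rfl⟩ : ∃ k, n = k + 1 := ⟨n - 1, (Nat.succ_pred_eq_of_pos hn).symm⟩
  have hF : PowerSeries.mk (fun m => B (k+1) m x / (m.factorial : ℂ))
      = Vps ^ (k+1) * expPS x := by
    have hne : (expPS 1 - 1) ^ (k+1) ≠ 0 := pow_ne_zero _ hE1ne
    apply mul_left_cancel₀ hne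
    rw [hB (k+1) x]
    calc X ^ (k+1) * expPS x = (Vps * (expPS 1 - 1)) ^ (k+1) * expPS x := by rw [hVE]
      _ = (expPS 1 - 1) ^ (k+1) * (Vps ^ (k+1) * expPS x) := by rw [mul_pow]; ring
  have hcoeff := congrArg (coeff k) hF
  rw [coeff_mk] at hcoeff
  have hfne : ((k.factorial : ℕ) : ℂ) ≠ 0 := Nat.cast_ne_zero.mpr k.factorial_ne_zero
  have hBval : B (k+1) k x = (k.factorial : ℂ) * coeff k (Vps ^ (k+1) * expPS x) := by
    rw [← hcoeff]
    field_simp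
  have hmain := mainT k x
  have hsimp : k + 1 - 1 = k := rfl
  rw [hsimp, hBval, hmain]
  rw [Finset.prod_range_succ']
  have : (∏ i ∈ Finset.range k, (x - ((i:ℕ)+1 : ℕ))) = ∏ i ∈ Finset.range k, (x - 1 - i) := by
    exact Finset.prod_congr rfl fun i _ => by push_cast; ring
  rw [this]
  push_cast
  ring
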